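/- Directional stationarity of RA-DCA accumulation points (deterministic core): Assume g convex C^1 with L_g-Lipschitz gradient, each psi_i convex C^1, F = g - max_i psi_i bounded below with compact enlarged level set; epsilon_k >= 0 summable; the subproblem objective mu-strongly convex uniformly in k; tau_k decreasing to 0; and along every subsequence x^k -> xbar, every index active at xbar eventually belongs to the numerical active set A_k (after passing to a further subsequence). Suppose further that at every iteration either (a) the selected vector v^k is a convex combination of epsilon_k-active gradients and the true vertex residual satisfies max_{i in A_k}||grad psi_i(x^k) - grad g(x^k)|| <= tau_k / (1-eta') for a fixed eta' in (0,1), or (b) v^k = grad psi_{i_k}(x^k) for some i_k in A_k with ||v^k - grad g(x^k)|| >= c > 0 (safeguard triggered with embedding constants). Then, if the descent recursion forces ||x^{k+1} - x^k|| -> 0, every accumulation point xbar of (x^k) satisfies R_d(xbar) = max_{i in A(xbar)} ||grad g(xbar) - grad psi_i(xbar)|| = 0 and is therefore directionally stationary. -/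

import Mathlib

open scoped RealInnerProductSpace
open Filter Topology

section AuxRADCA

variable {E : Type*} [NormedAddCommGroup E] [InnerProductSpace ℝ E] [CompleteSpace E]

private lemma aux_hasDerivAt_dir {f : E → ℝ} {G x : E} (hG : HasGradientAt f G x) (d : E) :
    HasDerivAt (fun t : ℝ => f (x + t • d)) ⟪G, d⟫ 0 := by
  have h1 : HasDerivAt (fun t : ℝ => x + t • d) d 0 := by
    simpa using ((hasDerivAt_id (0:ℝ)).smul_const d).const_add x
  have h2 : HasFDerivAt f ((InnerProductSpace.toDual ℝ E) G) (x + (0:ℝ) • d) := by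
    simpa using hG.hasFDerivAt
  have := h2.comp_hasDerivAt (0:ℝ) h1
  rw [InnerProductSpace.toDual_apply_apply] at this
  exact this

private lemma aux_subgrad {f : E → ℝ} (hf : ConvexOn ℝ Set.univ f) {G x : E}
    (hG : HasGradientAt f G x) (y : E) : ⟪G, y - x⟫ ≤ f y - f x := by
  have hder := aux_hasDerivAt_dir hG (y - x)
  have hslope := hasDerivAt_iff_tendsto_slope.mp hder
  have hmono : 𝓝[>] (0:ℝ) ≤ 𝓝[≠] (0:ℝ) :=
    nhdsWithin_mono 0 (fun t ht => ne_of_gt ht)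
  refine le_of_tendsto (hslope.mono_left hmono) ?_
  filter_upwards [Ioo_mem_nhdsGT_of_mem (by norm_num : (0:ℝ) ∈ Set.Ico (0:ℝ) 1)]
    with t ht
  have ht0 : 0 < t := ht.1
  have hconv : f (x + t • (y - x)) ≤ (1 - t) * f x + t * f y := by
    have := hf.2 (Set.mem_univ x) (Set.mem_univ y) (by linarith [ht.2] : (0:ℝ) ≤ 1 - t)
      (le_of_lt ht0) (by ring)
    have hxy : (1 - t) • x + t • y = x + t • (y - x) := by
      simp [smul_sub, sub_smul]; abel
    rwa [hxy] at this
  have : slope (fun t : ℝ => f (x + t • (y - x))) 0 t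
      = (f (x + t • (y - x)) - f x) / t := by
    simp [slope, div_eq_inv_mul]
  rw [this, div_le_iff₀ ht0]
  simpa using by nlinarith [hconv]

private lemma aux_uniq {f : E → ℝ} {G x w : E} (hG : HasGradientAt f G x)
    (hw : ∀ y, ⟪w, y - x⟫ ≤ f y - f x) : w = G := by
  have key : ∀ d : E, ⟪w, d⟫ ≤ ⟪G, d⟫ := by
    intro d
    have hder := aux_hasDerivAt_dir hG d
    have hslope := hasDerivAt_iff_tendsto_slope.mp hder
    have hmono : 𝓝[>] (0:ℝ) ≤ 𝓝[≠] (0:ℝ) :=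
      nhdsWithin_mono 0 (fun t ht => ne_of_gt ht)
    refine ge_of_tendsto (hslope.mono_left hmono) ?_
    filter_upwards [self_mem_nhdsWithin] with t (ht : 0 < t)
    have h1 : ⟪w, (x + t • d) - x⟫ ≤ f (x + t • d) - f x := hw _
    have h2 : ⟪w, (x + t • d) - x⟫ = t * ⟪w, d⟫ := by
      simp [inner_smul_right]
    have : slope (fun t : ℝ => f (x + t • d)) 0 t = (f (x + t • d) - f x) / t := by
      simp [slope, div_eq_inv_mul]
    rw [this, le_div_iff₀ ht]
    rw [h2] at h1; linarith
  have hd := key (w - G)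
  have : ⟪w - G, w - G⟫ ≤ 0 := by
    simp only [inner_sub_left, inner_sub_right] at hd ⊢
    linarith [real_inner_comm w G]
  have := real_inner_self_nonpos.mp this
  exact sub_eq_zero.mp this

private lemma aux_vformula {g : E → ℝ} {gradg : E → E} (hg : ∀ y, HasGradientAt g (gradg y) y)
    (vk xk : E) (σ : ℝ) {q : E → ℝ}
    (hq : ∀ y, q y = g y - ⟪vk, y - xk⟫ + σ / 2 * ‖y - xk‖ ^ 2)
    {z : E} (hmin : IsMinOn q Set.univ z) :
    vk = gradg z + σ • (z - xk) := by
  have hA : HasFDerivAt g ((InnerProductSpace.toDual ℝ E) (gradg z)) z := (hg z).hasFDerivAt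
  have hid : HasFDerivAt (fun y : E => y - xk) (ContinuousLinearMap.id ℝ E) z :=
    (hasFDerivAt_id z).sub_const xk
  have hB : HasFDerivAt (fun y : E => ⟪vk, y - xk⟫)
      ((innerSL ℝ vk).comp (ContinuousLinearMap.id ℝ E)) z :=
    (innerSL ℝ vk).hasFDerivAt.comp z hid
  have hC : HasFDerivAt (fun y : E => σ / 2 * ‖y - xk‖ ^ 2)
      ((σ / 2) • (2 • (innerSL ℝ (z - xk)).comp (ContinuousLinearMap.id ℝ E))) z :=
    (hid.norm_sq).const_mul (σ / 2)
  have hq' : HasFDerivAt q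
      (((InnerProductSpace.toDual ℝ E) (gradg z) - (innerSL ℝ vk).comp (ContinuousLinearMap.id ℝ E))
        + (σ / 2) • (2 • (innerSL ℝ (z - xk)).comp (ContinuousLinearMap.id ℝ E))) z := by
    have hqe : q = fun y => g y - ⟪vk, y - xk⟫ + σ / 2 * ‖y - xk‖ ^ 2 := funext hq
    rw [hqe]; exact (hA.sub hB).add hC
  have h0 := (hmin.isLocalMin Filter.univ_mem).hasFDerivAt_eq_zero hq'
  set w : E := gradg z + σ • (z - xk) - vk with hw
  have happ := congrFun (congrArg (fun L : E →L[ℝ] ℝ => (L : E → ℝ)) h0) w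
  simp only [ContinuousLinearMap.add_apply, ContinuousLinearMap.sub_apply,
    ContinuousLinearMap.smul_apply, ContinuousLinearMap.coe_smul', Pi.smul_apply,
    ContinuousLinearMap.comp_apply, ContinuousLinearMap.coe_id', id_eq,
    InnerProductSpace.toDual_apply_apply, innerSL_apply_apply, ContinuousLinearMap.zero_apply,
    ContinuousLinearMap.coe_comp'] at happ
  simp only [smul_eq_mul, nsmul_eq_mul, Nat.cast_ofNat] at happ
  ring_nf at happ
  have hinner : ⟪w, w⟫ = 0 := by
    rw [hw, inner_sub_left, inner_add_left, real_inner_smul_left]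
    ring_nf
    linarith [happ]
  have hz : w = 0 := inner_self_eq_zero.mp hinner
  rw [hw] at hz
  exact (sub_eq_zero.mp hz).symm

end AuxRADCA

/-- Directional stationarity of RA-DCA accumulation points (deterministic core).  Under the
regularity, summable numerical active-set tolerance, uniform strong convexity, vanishing
safeguard tolerances, numerical active-set consistency, and the two-branch selection rule
(convex-combination branch with small true vertex residual, or safeguarded vertex branch with
vertex mismatch bounded below by `c > 0`), if the steps `‖x^{k+1} - x^k‖ → 0` then every
accumulation point `x̄` has vanishing vertex residual `R_d(x̄) = 0` (all active gradients equal
`∇g(x̄)`), hence is directionally stationary. -/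
theorem stmt_12 {n : ℕ} {ι : Type*} [Fintype ι] [Nonempty ι]
    (g : EuclideanSpace ℝ (Fin n) → ℝ)
    (gradg : EuclideanSpace ℝ (Fin n) → EuclideanSpace ℝ (Fin n))
    (hgconv : ConvexOn ℝ Set.univ g) (hg : ∀ y, HasGradientAt g (gradg y) y)
    (Lg : ℝ) (hLg : ∀ y z, ‖gradg y - gradg z‖ ≤ Lg * ‖y - z‖)
    (ψ : ι → EuclideanSpace ℝ (Fin n) → ℝ)
    (gradψ : ι → EuclideanSpace ℝ (Fin n) → EuclideanSpace ℝ (Fin n))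
    (hψconv : ∀ i, ConvexOn ℝ Set.univ (ψ i))
    (hψ : ∀ i y, HasGradientAt (ψ i) (gradψ i y) y)
    (h F : EuclideanSpace ℝ (Fin n) → ℝ)
    (hdef : ∀ y, h y = Finset.univ.sup' Finset.univ_nonempty (fun i => ψ i y))
    (hFdef : ∀ y, F y = g y - h y)
    (Finf : ℝ) (hFbd : ∀ y, Finf ≤ F y)
    (ε : ℕ → ℝ) (hε : ∀ k, 0 ≤ ε k) (Eε : ℝ) (hEε : HasSum ε Eε)
    (x : ℕ → EuclideanSpace ℝ (Fin n))
    (hlevel : IsCompact {y | F y ≤ F (x 0) + Eε})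
    (A : ℕ → Finset ι) (hAdef : ∀ k i, i ∈ A k ↔ h (x k) - ψ i (x k) ≤ ε k)
    (v : ℕ → EuclideanSpace ℝ (Fin n)) (σ : ℝ) (hσ : 0 ≤ σ)
    (q : ℕ → EuclideanSpace ℝ (Fin n) → ℝ)
    (hq : ∀ k y, q k y = g y - ⟪v k, y - x k⟫ + σ / 2 * ‖y - x k‖ ^ 2)
    (μ : ℝ) (hμ : 0 < μ) (hstrong : ∀ k, StrongConvexOn Set.univ μ (q k))
    (hmin : ∀ k, IsMinOn (q k) Set.univ (x (k + 1)))
    (τ : ℕ → ℝ) (hτanti : Antitone τ) (hτ0 : Tendsto τ atTop (nhds 0))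
    (hconsist : ∀ (xbar : EuclideanSpace ℝ (Fin n)) (φ : ℕ → ℕ), StrictMono φ →
      Tendsto (x ∘ φ) atTop (nhds xbar) → ∀ i, ψ i xbar = h xbar →
      ∃ φ' : ℕ → ℕ, StrictMono φ' ∧ ∀ᶠ k in atTop, i ∈ A (φ (φ' k)))
    (η' : ℝ) (hη' : η' ∈ Set.Ioo (0 : ℝ) 1) (c : ℝ) (hc : 0 < c)
    (hbranch : ∀ k,
      (v k ∈ convexHull ℝ ((fun i => gradψ i (x k)) '' {i | i ∈ A k}) ∧
        ∀ i ∈ A k, ‖gradψ i (x k) - gradg (x k)‖ ≤ τ k / (1 - η')) ∨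
      (∃ ik ∈ A k, v k = gradψ ik (x k) ∧ c ≤ ‖v k - gradg (x k)‖))
    (hstep : Tendsto (fun k => ‖x (k + 1) - x k‖) atTop (nhds 0)) :
    ∀ xbar : EuclideanSpace ℝ (Fin n), MapClusterPt xbar atTop x →
      (∀ i, ψ i xbar = h xbar → gradψ i xbar = gradg xbar) ∧
      (∀ d : EuclideanSpace ℝ (Fin n), ∀ i, ψ i xbar = h xbar →
        ⟪gradψ i xbar, d⟫ ≤ ⟪gradg xbar, d⟫) := by
  intro xbar hclust
  have hvf : ∀ k, v k = gradg (x (k+1)) + σ • (x (k+1) - x k) := fun k =>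
    aux_vformula hg (v k) (x k) σ (hq k) (hmin k)
  have hvb : ∀ k, ‖v k - gradg (x k)‖ ≤ (Lg + σ) * ‖x (k+1) - x k‖ := by
    intro k
    have he : v k - gradg (x k) = (gradg (x (k+1)) - gradg (x k)) + σ • (x (k+1) - x k) := by
      rw [hvf k]; abel
    rw [he]
    calc ‖(gradg (x (k+1)) - gradg (x k)) + σ • (x (k+1) - x k)‖
        ≤ ‖gradg (x (k+1)) - gradg (x k)‖ + ‖σ • (x (k+1) - x k)‖ := norm_add_le _ _
      _ ≤ Lg * ‖x (k+1) - x k‖ + σ * ‖x (k+1) - x k‖ := by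
          rw [norm_smul, Real.norm_eq_abs, abs_of_nonneg hσ]
          exact add_le_add (hLg _ _) le_rfl
      _ = (Lg + σ) * ‖x (k+1) - x k‖ := by ring
  have htend : Tendsto (fun k => ‖v k - gradg (x k)‖) atTop (nhds 0) := by
    have hb : Tendsto (fun k => (Lg + σ) * ‖x (k + 1) - x k‖) atTop (nhds 0) := by
      simpa using hstep.const_mul (Lg + σ)
    exact squeeze_zero (fun k => norm_nonneg _) hvb hb
  have hbrA : ∀ᶠ k in atTop, ∀ i ∈ A k, ‖gradψ i (x k) - gradg (x k)‖ ≤ τ k / (1 - η') := by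
    filter_upwards [htend.eventually_lt_const hc] with k hk
    rcases hbranch k with ⟨_, h2⟩ | ⟨ik, _, _, hge⟩
    · exact h2
    · exact absurd hge (not_le.mpr hk)
  have keymain : ∀ i, ψ i xbar = h xbar → gradψ i xbar = gradg xbar := by
    intro i hi
    obtain ⟨φ, hφ, hxφ⟩ := TopologicalSpace.FirstCountableTopology.tendsto_subseq hclust
    obtain ⟨φ', hφ', hiA⟩ := hconsist xbar φ hφ hxφ i hi
    set m : ℕ → ℕ := fun k => φ (φ' k) with hm
    have hmsm : StrictMono m := hφ.comp hφ'
    have hmt : Tendsto m atTop atTop := hmsm.tendsto_atTop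
    have hxm : Tendsto (fun k => x (m k)) atTop (nhds xbar) := hxφ.comp hφ'.tendsto_atTop
    have hgc : Tendsto (fun k => gradg (x (m k))) atTop (nhds (gradg xbar)) := by
      rw [tendsto_iff_norm_sub_tendsto_zero]
      have hb : Tendsto (fun k => Lg * ‖x (m k) - xbar‖) atTop (nhds 0) := by
        simpa using (tendsto_iff_norm_sub_tendsto_zero.mp hxm).const_mul Lg
      exact squeeze_zero (fun k => norm_nonneg _) (fun k => hLg _ _) hb
    have hτm : Tendsto (fun k => τ (m k) / (1 - η')) atTop (nhds 0) := by
      simpa using (hτ0.comp hmt).div_const (1 - η')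
    have hdiff : Tendsto (fun k => gradψ i (x (m k)) - gradg (x (m k))) atTop (nhds 0) := by
      refine squeeze_zero_norm' ?_ hτm
      filter_upwards [hmt.eventually hbrA, hiA] with k h1 h2
      exact h1 i h2
    have hgψ : Tendsto (fun k => gradψ i (x (m k))) atTop (nhds (gradg xbar)) := by
      simpa using hdiff.add hgc
    have hψcont : Continuous (ψ i) := by
      rw [continuous_iff_continuousAt]
      exact fun y => (hψ i y).differentiableAt.continuousAt
    have hsub : ∀ y, ⟪gradg xbar, y - xbar⟫ ≤ ψ i y - ψ i xbar := by
      intro y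
      have hterm : ∀ k, ⟪gradψ i (x (m k)), y - x (m k)⟫ ≤ ψ i y - ψ i (x (m k)) :=
        fun k => aux_subgrad (hψconv i) (hψ i (x (m k))) y
      have hL : Tendsto (fun k => ⟪gradψ i (x (m k)), y - x (m k)⟫) atTop
          (nhds ⟪gradg xbar, y - xbar⟫) :=
        hgψ.inner (tendsto_const_nhds.sub hxm)
      have hR : Tendsto (fun k => ψ i y - ψ i (x (m k))) atTop (nhds (ψ i y - ψ i xbar)) :=
        tendsto_const_nhds.sub ((hψcont.tendsto xbar).comp hxm)
      exact le_of_tendsto_of_tendsto' hL hR hterm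
    exact (aux_uniq (hψ i xbar) hsub).symm
  refine ⟨keymain, fun d i hi => ?_⟩
  rw [keymain i hi]
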